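/- Let φ₀ and φ be two solutions of φ' + sin φ = f related by exp(iφ) = exp(iφ₀)·(1 + C·conj(F₀))/(1 + C·F₀) for a real constant C, where F₀ = Q₀ + i e^{-P₀}. If F = Q + i e^{-P} are the integrals built from φ with F(0) = i, then F = (F₀ - C)/(1 + C F₀) identically. -/

import Mathlib

/-- If two solutions `φ₀, φ` of `φ' + sin φ = f` are related by
`exp(iφ) = exp(iφ₀)(1 + C conj(F₀))/(1 + C F₀)` with `C` real, where
`F₀, F` are the associated `Q + i e^{-P}` functions (normalized by `F(0) = F₀(0) = i`),
then `F = (F₀ - C)/(1 + C F₀)` identically. -/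
theorem stmt5 (f φ φ' φ₀ φ₀' : ℝ → ℝ) (F F₀ : ℝ → ℂ) (C : ℝ)
    (hφ : ∀ t, HasDerivAt φ (φ' t) t) (hφ₀ : ∀ t, HasDerivAt φ₀ (φ₀' t) t)
    (hode : ∀ t, φ' t + Real.sin (φ t) = f t)
    (hode₀ : ∀ t, φ₀' t + Real.sin (φ₀ t) = f t)
    (hF : ∀ t, HasDerivAt F
      (-Complex.I * Complex.exp (Complex.I * φ t) * (((F t).im : ℝ) : ℂ)) t)
    (hF0 : F 0 = Complex.I)
    (hF₀ : ∀ t, HasDerivAt F₀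
      (-Complex.I * Complex.exp (Complex.I * φ₀ t) * (((F₀ t).im : ℝ) : ℂ)) t)
    (hF₀0 : F₀ 0 = Complex.I)
    (hden : ∀ t, 1 + (C : ℂ) * F₀ t ≠ 0)
    (hrel : ∀ t, Complex.exp (Complex.I * φ t) =
      Complex.exp (Complex.I * φ₀ t) *
        ((1 + (C : ℂ) * (starRingEnd ℂ) (F₀ t)) / (1 + (C : ℂ) * F₀ t))) :
    ∀ t, F t = (F₀ t - C) / (1 + (C : ℂ) * F₀ t) := by
  set v : ℝ → ℂ → ℂ := fun s x => -Complex.I * Complex.exp (Complex.I * φ s) * ((x.im : ℝ) : ℂ)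
    with hv_def
  set G : ℝ → ℂ := fun t => (F₀ t - C) / (1 + (C : ℂ) * F₀ t) with hG_def
  -- Lipschitz
  have hlip : ∀ s, LipschitzWith 1 (v s) := by
    intro s
    refine LipschitzWith.of_dist_le_mul fun x y => ?_
    rw [dist_eq_norm, dist_eq_norm]
    have h1 : v s x - v s y = -Complex.I * Complex.exp (Complex.I * φ s) * (((x - y).im : ℝ) : ℂ) := by
      simp only [hv_def, Complex.sub_im]
      push_cast
      ring
    rw [h1]
    rw [norm_mul, norm_mul]
    have he : ‖Complex.exp (Complex.I * φ s)‖ = 1 := by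
      rw [Complex.norm_exp]
      simp
    simp only [norm_neg, Complex.norm_I, he, one_mul, Complex.norm_real, Real.norm_eq_abs]
    calc |(x - y).im| ≤ ‖x - y‖ := Complex.abs_im_le_norm _
      _ = 1 * ‖x - y‖ := by rw [one_mul]
  -- G solves the same ODE
  have hG0 : G 0 = Complex.I := by
    simp only [hG_def, hF₀0]
    rw [div_eq_iff (by rw [← hF₀0]; exact hden 0)]
    linear_combination (-(C:ℂ)) * Complex.I_sq
  have hG' : ∀ t, HasDerivAt G (v t (G t)) t := by
    intro t
    set E₀ := Complex.exp (Complex.I * φ₀ t) with hE₀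
    set D := -Complex.I * E₀ * (((F₀ t).im : ℝ) : ℂ) with hD
    have hw : (1 : ℂ) + C * F₀ t ≠ 0 := hden t
    have hnum : HasDerivAt (fun t => F₀ t - (C : ℂ)) D t := (hF₀ t).sub_const _
    have hden' : HasDerivAt (fun t => 1 + (C : ℂ) * F₀ t) ((C : ℂ) * D) t :=
      ((hF₀ t).const_mul _).const_add _
    have hdiv := hnum.div hden' hw
    convert hdiv using 1
    · rfl
    · rfl
    -- show v t (G t) equals the quotient-rule derivative
    have hn : Complex.normSq (1 + (C:ℂ) * F₀ t) ≠ 0 := (Complex.normSq_pos.2 hw).ne'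
    have him : ((F₀ t - C) / (1 + (C:ℂ) * F₀ t)).im * Complex.normSq (1 + (C:ℂ) * F₀ t)
        = (F₀ t).im * (1 + C^2) := by
      rw [Complex.div_im, div_sub_div_same, div_mul_cancel₀ _ hn]
      simp [Complex.add_re, Complex.add_im, Complex.mul_re, Complex.mul_im, Complex.sub_re,
        Complex.sub_im]
      ring
    have him' : (((G t).im : ℝ) : ℂ) * ((1 + (C:ℂ) * F₀ t) * (starRingEnd ℂ) (1 + (C:ℂ) * F₀ t))
        = (((F₀ t).im : ℝ) : ℂ) * (1 + (C:ℂ)^2) := by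
      rw [Complex.mul_conj]
      exact_mod_cast congrArg (Complex.ofReal) him
    have hcw : (starRingEnd ℂ) (1 + (C:ℂ) * F₀ t) = 1 + (C:ℂ) * (starRingEnd ℂ) (F₀ t) := by
      simp
    have hcwne : (1 : ℂ) + C * (starRingEnd ℂ) (F₀ t) ≠ 0 := by
      rw [← hcw]
      intro h
      exact hw (by simpa using congrArg (starRingEnd ℂ) h)
    rw [hcw] at him'
    simp only [hv_def, hrel t, ← hE₀]
    rw [hD]
    field_simp
    linear_combination (-E₀) * him'
  -- uniqueness
  intro t
  have ht : t ∈ Set.Icc (-(|t| + 1)) (|t| + 1) := by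
    constructor <;> cases abs_cases t <;> linarith [abs_nonneg t]
  have h0 : (0 : ℝ) ∈ Set.Ioo (-(|t| + 1)) (|t| + 1) := by
    constructor <;> linarith [abs_nonneg t]
  have := ODE_solution_unique_of_mem_Icc (v := v) (s := fun _ => Set.univ) (K := 1)
    (fun s _ => (hlip s).lipschitzOnWith) h0
    (continuousOn_of_forall_continuousAt fun s _ => (hF s).continuousAt)
    (fun s _ => hF s) (fun _ _ => Set.mem_univ _)
    (continuousOn_of_forall_continuousAt fun s _ => (hG' s).continuousAt)
    (fun s _ => hG' s) (fun _ _ => Set.mem_univ _)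
    (by rw [hF0, hG0])
  exact this ht
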